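/- arXiv:0808.2382 — 2 statements merged into one kernel-verified Lean document; each statement's English description precedes it below -/
import Mathlib

section
/- For all $n \ge 1$ and all $q \ge 5$, the continuous-time quantum walk on the Hamming graph $H(n,q)$ starting at any fixed vertex is not instantaneous uniform mixing at any time: for every $t \in \mathbb{R}$ there exists a vertex $v$ with $|\psi_t(v)|^2 \neq q^{-n}$. -/
open Matrix Complex Finset

set_option linter.unusedSectionVars false
set_option linter.unusedTactic false

/-- Adjacency matrix of the Hamming graph `H(n,q)`: vertices are words of
length `n` over a `q`-letter alphabet, adjacent iff they differ in exactly one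
coordinate. -/
def adjHamming (n q : ℕ) : Matrix (Fin n → Fin q) (Fin n → Fin q) ℂ :=
  Matrix.of fun u v =>
    if (Finset.univ.filter fun i => u i ≠ v i).card = 1 then 1 else 0

/-- Continuous-time quantum walk `ψ_t = exp(-itA) ψ₀`. -/
noncomputable def walk {V : Type*} [Fintype V] [DecidableEq V]
    (A : Matrix V V ℂ) (ψ0 : V → ℂ) (t : ℝ) : V → ℂ :=
  (NormedSpace.exp ((-(t : ℂ) * Complex.I) • A)).mulVec ψ0




lemma exp_mulVec_eigen {V : Type*} [Fintype V] [DecidableEq V] (B : Matrix V V ℂ)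
    (w : V → ℂ) (ν : ℂ) (h : B.mulVec w = ν • w) :
    (NormedSpace.exp B).mulVec w = Complex.exp ν • w := by
  letI : SeminormedRing (Matrix V V ℂ) := Matrix.linftyOpSemiNormedRing
  letI : NormedRing (Matrix V V ℂ) := Matrix.linftyOpNormedRing
  letI : NormedAlgebra ℂ (Matrix V V ℂ) := Matrix.linftyOpNormedAlgebra
  have hpow : ∀ k : ℕ, (B ^ k).mulVec w = ν ^ k • w := by
    intro k
    induction k with
    | zero => simp [Matrix.one_mulVec]
    | succ k ih =>
        rw [pow_succ, ← Matrix.mulVec_mulVec, h, Matrix.mulVec_smul, ih, smul_smul, pow_succ]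
        ring_nf
  let L : Matrix V V ℂ →ₗ[ℂ] (V → ℂ) :=
    { toFun := fun M => M.mulVec w
      map_add' := fun M N => Matrix.add_mulVec M N w
      map_smul' := fun c M => Matrix.smul_mulVec c M w }
  have hL : Continuous L := L.continuous_of_finiteDimensional
  have hsum : Summable fun k : ℕ => (k.factorial : ℂ)⁻¹ • B ^ k :=
    NormedSpace.expSeries_summable' B
  have key : (NormedSpace.exp B).mulVec w
      = ∑' k : ℕ, ((k.factorial : ℂ)⁻¹ • B ^ k).mulVec w := by
    rw [NormedSpace.exp_eq_tsum ℂ]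
    exact ((hsum.hasSum.map L.toAddMonoidHom hL).tsum_eq).symm
  rw [key]
  have hterm : ∀ k : ℕ, ((k.factorial : ℂ)⁻¹ • B ^ k).mulVec w
      = ((k.factorial : ℂ)⁻¹ • ν ^ k) • w := by
    intro k
    rw [Matrix.smul_mulVec, hpow k, smul_smul, smul_eq_mul]
  simp_rw [hterm]
  have hsum2 : Summable fun k : ℕ => (k.factorial : ℂ)⁻¹ • ν ^ k :=
    NormedSpace.expSeries_summable' ν
  rw [hsum2.tsum_smul_const]
  congr 1
  rw [Complex.exp_eq_exp_ℂ, NormedSpace.exp_eq_tsum ℂ]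


section chars
variable (q : ℕ) [NeZero q]
noncomputable def ec : AddChar (ZMod q) ℂ := ZMod.stdAddChar
def cq (a : Fin q) : ZMod q := ((a : ℕ) : ZMod q)
lemma cq_inj : Function.Injective (cq q) := by
  intro a b h
  have := congrArg ZMod.val h
  rw [cq, cq, ZMod.val_cast_of_lt a.isLt, ZMod.val_cast_of_lt b.isLt] at this
  exact Fin.ext this
lemma cq_bij : Function.Bijective (cq q) :=
  (Fintype.bijective_iff_injective_and_card _).mpr ⟨cq_inj q, by simp [ZMod.card]⟩
lemma ec_sum (d : ZMod q) : ∑ z : ZMod q, ec q (d * z) = if d = 0 then (q : ℂ) else 0 := by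
  split_ifs with h
  · simp [h, ec, AddChar.map_zero_eq_one, ZMod.card]
  · exact AddChar.sum_eq_zero_of_ne_one (ZMod.isPrimitive_stdAddChar q h)
lemma ec_sum_fin (d : ZMod q) :
    ∑ b : Fin q, ec q (d * cq q b) = if d = 0 then (q : ℂ) else 0 := by
  rw [← ec_sum q d]
  exact Fintype.sum_bijective (cq q) (cq_bij q) _ _ (fun b => rfl)
end chars

section cube
variable (n q : ℕ) [NeZero q]

noncomputable def chi (x : Fin n → ZMod q) (v : Fin n → Fin q) : ℂ :=
  ∏ i, ec q (x i * cq q (v i))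

noncomputable def lam (x : Fin n → ZMod q) : ℂ :=
  ∑ i, if x i = 0 then (q : ℂ) - 1 else -1

lemma chi_update (x : Fin n → ZMod q) (u : Fin n → Fin q) (i : Fin n) (b : Fin q) :
    chi n q x (Function.update u i b)
      = ec q (x i * cq q b) * ∏ j ∈ univ.erase i, ec q (x j * cq q (u j)) := by
  rw [chi, ← Finset.mul_prod_erase univ _ (mem_univ i), Function.update_self]
  congr 1
  exact Finset.prod_congr rfl fun j hj => by
    rw [Function.update_of_ne (Finset.mem_erase.mp hj).1]


lemma update_diff_single {n q : ℕ} {u v : Fin n → Fin q} {i : Fin n}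
    (hv : (Finset.univ.filter fun j => u j ≠ v j) = {i}) :
    Function.update u i (v i) = v := by
  funext j
  rcases eq_or_ne j i with rfl | hj
  · rw [Function.update_self]
  · rw [Function.update_of_ne hj]
    by_contra hne
    have : j ∈ Finset.univ.filter fun j => u j ≠ v j := by
      simp only [Finset.mem_filter, Finset.mem_univ, true_and]; exact hne
    rw [hv, Finset.mem_singleton] at this
    exact hj this

lemma adj_eigen (x : Fin n → ZMod q) :
    (adjHamming n q).mulVec (chi n q x) = lam n q x • chi n q x := by
  funext u
  have step1 : (adjHamming n q).mulVec (chi n q x) u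
      = ∑ i : Fin n, ∑ v : Fin n → Fin q,
          if (Finset.univ.filter fun j => u j ≠ v j) = {i} then chi n q x v else 0 := by
    rw [Finset.sum_comm]
    simp only [Matrix.mulVec, dotProduct, adjHamming, Matrix.of_apply]
    refine Finset.sum_congr rfl fun v _ => ?_
    by_cases hc : (Finset.univ.filter fun j => u j ≠ v j).card = 1
    · obtain ⟨i, hi⟩ := Finset.card_eq_one.mp hc
      rw [if_pos hc, one_mul, Finset.sum_eq_single i]
      · rw [if_pos hi]
      · intro j _ hj
        rw [if_neg]
        intro hji
        exact hj (Finset.singleton_injective (hi.symm.trans hji)).symm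
      · simp
    · rw [if_neg hc, zero_mul]
      refine (Finset.sum_eq_zero fun i _ => ?_).symm
      rw [if_neg]
      intro hf
      exact hc (hf ▸ rfl)
  rw [step1]
  have step2 : ∀ i : Fin n,
      (∑ v : Fin n → Fin q,
          if (Finset.univ.filter fun j => u j ≠ v j) = {i} then chi n q x v else 0)
        = ∑ b : Fin q, if b ≠ u i then chi n q x (Function.update u i b) else 0 := by
    intro i
    rw [← Finset.sum_filter, ← Finset.sum_filter]
    refine Finset.sum_nbij' (fun v => v i) (fun b => Function.update u i b) ?_ ?_ ?_ ?_ ?_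
    · intro v hv
      simp only [Finset.mem_filter, Finset.mem_univ, true_and] at hv ⊢
      have : i ∈ Finset.univ.filter fun j => u j ≠ v j := hv ▸ Finset.mem_singleton_self i
      exact fun h => (Finset.mem_filter.mp this).2 h.symm
    · intro b hb
      simp only [Finset.mem_filter, Finset.mem_univ, true_and] at hb ⊢
      ext j
      simp only [Finset.mem_filter, Finset.mem_univ, true_and, Finset.mem_singleton]
      constructor
      · intro hj
        by_contra hji
        exact hj (by rw [Function.update_of_ne (Ne.symm (fun h => hji h.symm))])
      · intro hj
        subst hj
        rw [Function.update_self]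
        exact fun h => hb h.symm
    · intro v hv
      simp only [Finset.mem_filter, Finset.mem_univ, true_and] at hv
      exact update_diff_single hv
    · intro b hb
      exact Function.update_self i b u
    · intro v hv
      simp only [Finset.mem_filter, Finset.mem_univ, true_and] at hv
      rw [update_diff_single hv]
  have key : ∀ i : Fin n,
      (∑ b : Fin q, if b ≠ u i then chi n q x (Function.update u i b) else 0)
        = (if x i = 0 then (q : ℂ) - 1 else -1) * chi n q x u := by
    intro i
    set Q : ℂ := ∏ j ∈ univ.erase i, ec q (x j * cq q (u j)) with hQ
    have hchiu : chi n q x u = ec q (x i * cq q (u i)) * Q := by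
      rw [chi, ← Finset.mul_prod_erase univ _ (mem_univ i)]
    have h1 : (∑ b : Fin q, if b ≠ u i then chi n q x (Function.update u i b) else 0)
        = ∑ b ∈ univ.erase (u i), ec q (x i * cq q b) * Q := by
      rw [← Finset.sum_filter, Finset.filter_ne']
      exact Finset.sum_congr rfl fun b _ => chi_update n q x u i b
    rw [h1, ← Finset.sum_mul, Finset.sum_erase_eq_sub (mem_univ (u i)), ec_sum_fin]
    rcases eq_or_ne (x i) 0 with hx | hx
    · rw [if_pos hx, if_pos hx, hchiu, hx, zero_mul, AddChar.map_zero_eq_one]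
      ring
    · rw [if_neg hx, if_neg hx, hchiu]
      ring
  calc ∑ i : Fin n, ∑ v : Fin n → Fin q,
        (if (Finset.univ.filter fun j => u j ≠ v j) = {i} then chi n q x v else 0)
      = ∑ i : Fin n, (if x i = 0 then (q : ℂ) - 1 else -1) * chi n q x u := by
        exact Finset.sum_congr rfl fun i _ => (step2 i).trans (key i)
    _ = lam n q x • chi n q x u := by
        rw [← Finset.sum_mul, lam]; rfl

noncomputable def kap (v0 : Fin n → Fin q) (x : Fin n → ZMod q) : ℂ :=
  ∏ i, ec q (-(x i * cq q (v0 i)))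

lemma delta_decomp (v0 v : Fin n → Fin q) :
    ∑ x : Fin n → ZMod q, kap n q v0 x * chi n q x v
      = if v = v0 then (q : ℂ) ^ n else 0 := by
  have hcomb : ∀ x : Fin n → ZMod q, kap n q v0 x * chi n q x v
      = ∏ i, ec q ((cq q (v i) - cq q (v0 i)) * x i) := by
    intro x
    rw [kap, chi, ← Finset.prod_mul_distrib]
    refine Finset.prod_congr rfl fun i _ => ?_
    rw [← AddChar.map_add_eq_mul]
    congr 1
    ring
  simp_rw [hcomb]
  rw [← Fintype.prod_sum (fun i d => ec q ((cq q (v i) - cq q (v0 i)) * d))]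
  have hfac : ∀ i, ∑ d : ZMod q, ec q ((cq q (v i) - cq q (v0 i)) * d)
      = if v i = v0 i then (q : ℂ) else 0 := by
    intro i
    rw [ec_sum]
    congr 1
    simp only [sub_eq_zero, eq_iff_iff]
    exact ⟨fun h => cq_inj q h, fun h => by rw [h]⟩
  simp_rw [hfac]
  rcases eq_or_ne v v0 with rfl | hv
  · simp
  · rw [if_neg hv]
    obtain ⟨i, hi⟩ := Function.ne_iff.mp hv
    exact Finset.prod_eq_zero (mem_univ i) (if_neg hi)

lemma Gsum (s : ℂ) (δ : ZMod q) (hq : 1 ≤ q) :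
    ∑ d : ZMod q, Complex.exp (s * (if d = 0 then (q : ℂ) - 1 else -1)) * ec q (δ * d)
      = if δ = 0
          then Complex.exp (s * ((q : ℂ) - 1)) + ((q : ℂ) - 1) * Complex.exp (s * (-1))
          else Complex.exp (s * ((q : ℂ) - 1)) - Complex.exp (s * (-1)) := by
  rw [← Finset.add_sum_erase univ _ (mem_univ (0 : ZMod q))]
  have h0 : Complex.exp (s * (if (0 : ZMod q) = 0 then (q : ℂ) - 1 else -1)) * ec q (δ * 0)
      = Complex.exp (s * ((q : ℂ) - 1)) := by
    rw [if_pos rfl, mul_zero, AddChar.map_zero_eq_one, mul_one]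
  rw [h0]
  have herase : ∀ d ∈ univ.erase (0 : ZMod q),
      Complex.exp (s * (if d = 0 then (q : ℂ) - 1 else -1)) * ec q (δ * d)
        = Complex.exp (s * (-1)) * ec q (δ * d) := by
    intro d hd
    rw [if_neg (Finset.mem_erase.mp hd).1]
  rw [Finset.sum_congr rfl herase, ← Finset.mul_sum]
  have hcast : ((q - 1 : ℕ) : ℂ) = (q : ℂ) - 1 := by
    push_cast [Nat.cast_sub hq]
    ring
  rcases eq_or_ne δ 0 with rfl | hδ
  · rw [if_pos rfl]
    have : ∀ d ∈ univ.erase (0 : ZMod q), ec q (0 * d) = 1 := by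
      intro d _
      rw [zero_mul, AddChar.map_zero_eq_one]
    rw [Finset.sum_congr rfl this, Finset.sum_const, Finset.card_erase_of_mem (mem_univ _),
      Finset.card_univ, ZMod.card, nsmul_eq_mul, mul_one, hcast]
    ring
  · rw [if_neg hδ]
    have : ∑ d ∈ univ.erase (0 : ZMod q), ec q (δ * d)
        = (∑ d : ZMod q, ec q (δ * d)) - ec q (δ * 0) := by
      rw [Finset.sum_erase_eq_sub (mem_univ _)]
    rw [this, ec_sum, if_neg hδ, mul_zero, AddChar.map_zero_eq_one]
    ring


lemma walk_value (v0 v : Fin n → Fin q) (t : ℝ) :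
    ((q : ℂ) ^ n) * walk (adjHamming n q) (Pi.single v0 1) t v
      = ∏ i, ∑ d : ZMod q,
          Complex.exp ((-(t : ℂ) * Complex.I) * (if d = 0 then (q : ℂ) - 1 else -1))
            * ec q ((cq q (v i) - cq q (v0 i)) * d) := by
  set s : ℂ := -(t : ℂ) * Complex.I with hs
  set M := NormedSpace.exp (s • adjHamming n q) with hM
  have hexp : ∀ x : Fin n → ZMod q,
      M.mulVec (chi n q x) = Complex.exp (s * lam n q x) • chi n q x := by
    intro x
    refine exp_mulVec_eigen _ _ _ ?_
    rw [Matrix.smul_mulVec, adj_eigen, smul_smul]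
  have hdelta : ((q : ℂ) ^ n) • (Pi.single v0 1 : (Fin n → Fin q) → ℂ)
      = ∑ x : Fin n → ZMod q, kap n q v0 x • chi n q x := by
    funext w
    rw [Finset.sum_apply]
    simp only [Pi.smul_apply, smul_eq_mul]
    rw [delta_decomp, Pi.single_apply]
    split_ifs <;> simp
  have h1 : ((q : ℂ) ^ n) * walk (adjHamming n q) (Pi.single v0 1) t v
      = ∑ x : Fin n → ZMod q, kap n q v0 x * (Complex.exp (s * lam n q x) * chi n q x v) := by
    have : ((q : ℂ) ^ n) * walk (adjHamming n q) (Pi.single v0 1) t v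
        = (M.mulVec (((q : ℂ) ^ n) • (Pi.single v0 1 : (Fin n → Fin q) → ℂ))) v := by
      rw [Matrix.mulVec_smul]
      rfl
    rw [this, hdelta]
    have hsum : M.mulVec (∑ x : Fin n → ZMod q, kap n q v0 x • chi n q x)
        = ∑ x : Fin n → ZMod q, kap n q v0 x • M.mulVec (chi n q x) := by
      rw [← Matrix.mulVecLin_apply, map_sum]
      simp only [_root_.map_smul, Matrix.mulVecLin_apply]
    rw [hsum]
    rw [Finset.sum_apply]
    refine Finset.sum_congr rfl fun x _ => ?_
    rw [hexp x]
    simp [smul_eq_mul, mul_assoc]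
  rw [h1]
  have h2 : ∀ x : Fin n → ZMod q,
      kap n q v0 x * (Complex.exp (s * lam n q x) * chi n q x v)
        = ∏ i, (Complex.exp (s * (if x i = 0 then (q : ℂ) - 1 else -1))
            * ec q ((cq q (v i) - cq q (v0 i)) * x i)) := by
    intro x
    have hexpprod : Complex.exp (s * lam n q x)
        = ∏ i, Complex.exp (s * (if x i = 0 then (q : ℂ) - 1 else -1)) := by
      rw [lam, Finset.mul_sum, Complex.exp_sum]
    rw [hexpprod, kap, chi, ← Finset.prod_mul_distrib, ← Finset.prod_mul_distrib]
    refine Finset.prod_congr rfl fun i _ => ?_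
    have : ec q ((cq q (v i) - cq q (v0 i)) * x i)
        = ec q (-(x i * cq q (v0 i))) * ec q (x i * cq q (v i)) := by
      rw [← AddChar.map_add_eq_mul]
      congr 1
      ring
    rw [this]
    ring
  rw [Finset.sum_congr rfl fun x _ => h2 x,
    ← Fintype.prod_sum (fun i d => Complex.exp (s * (if d = 0 then (q : ℂ) - 1 else -1))
        * ec q ((cq q (v i) - cq q (v0 i)) * d))]

end cube


/-- For `n ≥ 1` and `q ≥ 5`, the quantum walk on the Hamming graph `H(n,q)` is
never instantaneous uniform mixing. -/
theorem hamming_graph_not_uniform_mixing (n q : ℕ) (hn : 1 ≤ n) (hq : 5 ≤ q)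
    (v0 : Fin n → Fin q) (t : ℝ) :
    ∃ v : Fin n → Fin q,
      ‖walk (adjHamming n q) (Pi.single v0 1) t v‖ ^ 2
        ≠ 1 / q ^ n := by
  haveI : NeZero q := ⟨by omega⟩
  by_contra hcon
  push_neg at hcon
  set s : ℂ := -(t : ℂ) * Complex.I with hs
  set α : ℂ := Complex.exp (s * ((q : ℂ) - 1)) + ((q : ℂ) - 1) * Complex.exp (s * (-1)) with hα
  set β : ℂ := Complex.exp (s * ((q : ℂ) - 1)) - Complex.exp (s * (-1)) with hβ
  have hq1 : 1 ≤ q := by omega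
  have hqc : ((q : ℂ)) ^ n ≠ 0 := pow_ne_zero _ (Nat.cast_ne_zero.mpr (by omega))
  -- the two relevant vertices
  set i0 : Fin n := ⟨0, hn⟩ with hi0
  set b0 : Fin q := if v0 i0 = ⟨0, by omega⟩ then ⟨1, by omega⟩ else ⟨0, by omega⟩ with hb0
  have hb0ne : b0 ≠ v0 i0 := by
    rw [hb0]
    split_ifs with h
    · rw [h]
      intro hc
      exact absurd (Fin.val_eq_of_eq hc) (by simp)
    · exact fun hc => h hc.symm
  set v1 : Fin n → Fin q := Function.update v0 i0 b0 with hv1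
  -- amplitude at v0
  have hwv0 : ((q : ℂ) ^ n) * walk (adjHamming n q) (Pi.single v0 1) t v0 = α ^ n := by
    rw [walk_value]
    have : ∀ i : Fin n, (∑ d : ZMod q,
        Complex.exp (s * (if d = 0 then (q : ℂ) - 1 else -1))
          * ec q ((cq q (v0 i) - cq q (v0 i)) * d)) = α := by
      intro i
      rw [sub_self]
      rw [Gsum q s 0 hq1, if_pos rfl]
    rw [Finset.prod_congr rfl fun i _ => this i, Finset.prod_const, Finset.card_univ,
      Fintype.card_fin]
  -- amplitude at v1
  have hwv1 : ((q : ℂ) ^ n) * walk (adjHamming n q) (Pi.single v0 1) t v1 = β * α ^ (n - 1) := by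
    rw [walk_value]
    rw [← Finset.mul_prod_erase univ _ (mem_univ i0)]
    have hterm0 : (∑ d : ZMod q,
        Complex.exp (s * (if d = 0 then (q : ℂ) - 1 else -1))
          * ec q ((cq q (v1 i0) - cq q (v0 i0)) * d)) = β := by
      have hne : cq q (v1 i0) - cq q (v0 i0) ≠ 0 := by
        rw [hv1, Function.update_self]
        exact sub_ne_zero.mpr fun h => hb0ne (cq_inj q h)
      rw [Gsum q s _ hq1, if_neg hne]
    have hterm : ∀ j ∈ univ.erase i0, (∑ d : ZMod q,
        Complex.exp (s * (if d = 0 then (q : ℂ) - 1 else -1))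
          * ec q ((cq q (v1 j) - cq q (v0 j)) * d)) = α := by
      intro j hj
      have : v1 j = v0 j := by
        rw [hv1, Function.update_of_ne (Finset.mem_erase.mp hj).1]
      rw [this, sub_self, Gsum q s 0 hq1, if_pos rfl]
    rw [hterm0, Finset.prod_congr rfl hterm, Finset.prod_const,
      Finset.card_erase_of_mem (mem_univ _), Finset.card_univ, Fintype.card_fin]
  -- moduli
  set a : ℝ := ‖α‖ with ha
  set b : ℝ := ‖β‖ with hbdef
  set Q : ℝ := (q : ℝ) with hQ
  have hQ5 : (5 : ℝ) ≤ Q := by rw [hQ]; exact_mod_cast hq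
  have hQ0 : (0 : ℝ) < Q := by linarith
  have hQn : (0 : ℝ) < Q ^ n := pow_pos hQ0 n
  have habsq : ‖((q : ℂ) ^ n)‖ = Q ^ n := by
    rw [norm_pow, Complex.norm_natCast]
  -- |β| ≤ 2
  have habs1 : ‖Complex.exp (s * ((q : ℂ) - 1))‖ = 1 := by
    have : s * ((q : ℂ) - 1) = ((-t * ((q : ℝ) - 1) : ℝ) : ℂ) * Complex.I := by
      rw [hs]; push_cast; ring
    rw [this, Complex.norm_exp]
    simp
  have habs2 : ‖Complex.exp (s * (-1))‖ = 1 := by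
    have : s * (-1) = ((t : ℝ) : ℂ) * Complex.I := by rw [hs]; push_cast; ring
    rw [this, Complex.norm_exp]
    simp
  have hb2 : b ≤ 2 := by
    rw [hbdef, hβ]
    calc ‖Complex.exp (s * ((q : ℂ) - 1)) - Complex.exp (s * (-1))‖
        ≤ ‖Complex.exp (s * ((q : ℂ) - 1))‖ + ‖Complex.exp (s * (-1))‖ := norm_sub_le _ _
      _ = 2 := by rw [habs1, habs2]; norm_num
  have hb0' : 0 ≤ b := norm_nonneg _
  have ha0 : 0 ≤ a := norm_nonneg _
  -- equations from the mixing assumption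
  have h0 := hcon v0
  have h1 := hcon v1
  have hw0 : walk (adjHamming n q) (Pi.single v0 1) t v0 = α ^ n / (q : ℂ) ^ n := by
    rw [eq_div_iff hqc, mul_comm]
    exact hwv0
  have hw1 : walk (adjHamming n q) (Pi.single v0 1) t v1 = β * α ^ (n - 1) / (q : ℂ) ^ n := by
    rw [eq_div_iff hqc, mul_comm]
    exact hwv1
  rw [hw0, norm_div, norm_pow, habsq] at h0
  rw [hw1, norm_div, norm_mul, norm_pow, habsq] at h1
  rw [← ha] at h0 h1
  rw [← hbdef] at h1
  -- derive a^2 = Q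
  rw [div_pow, div_eq_div_iff (by positivity) (by positivity), one_mul] at h0 h1
  have e0 : (a ^ 2) ^ n * Q ^ n = Q ^ n * Q ^ n := by
    calc (a ^ 2) ^ n * Q ^ n = (a ^ n) ^ 2 * Q ^ n := by
          rw [← pow_mul, ← pow_mul, mul_comm n 2]
      _ = (Q ^ n) ^ 2 := h0
      _ = Q ^ n * Q ^ n := sq (Q ^ n) ▸ (pow_two (Q ^ n))
  have e0' : (a ^ 2) ^ n = Q ^ n := mul_right_cancel₀ (ne_of_gt hQn) e0
  have ha2 : a ^ 2 = Q := (pow_left_inj₀ (by positivity) hQ0.le (by omega)).mp e0'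
  -- derive b^2 = Q
  have e1 : (b ^ 2 * Q ^ (n - 1)) * Q ^ n = Q ^ n * Q ^ n := by
    calc (b ^ 2 * Q ^ (n - 1)) * Q ^ n = (b ^ 2 * (a ^ 2) ^ (n - 1)) * Q ^ n := by rw [ha2]
      _ = (b * a ^ (n - 1)) ^ 2 * Q ^ n := by ring
      _ = (Q ^ n) ^ 2 := h1
      _ = Q ^ n * Q ^ n := pow_two (Q ^ n)
  have e1' : b ^ 2 * Q ^ (n - 1) = Q ^ n := mul_right_cancel₀ (ne_of_gt hQn) e1
  have hQsplit : Q ^ n = Q ^ (n - 1) * Q := by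
    rw [← pow_succ]
    congr 1
    omega
  rw [hQsplit] at e1'
  have hb2Q : b ^ 2 = Q :=
    mul_right_cancel₀ (ne_of_gt (pow_pos hQ0 (n - 1))) (by linarith [e1'] )
  nlinarith [hb2Q, hb2, hb0', hQ5]
end

section
/- Let $n \ge 1$ and let $f: \mathbb{Z}_2^n \to \{0,1\}$ be a Boolean function whose Fourier transform $\hat f$ satisfies $|\mathrm{supp}(\hat f)| < 2^{n-1}$. Then the continuous-time quantum walk on the bunkbed graph $\mathcal{B}_n(A_f)$ starting at vertex $(0, 0_n)$ is not instantaneous uniform mixing at any time: for every $t \in \mathbb{R}$ there exists a vertex $v \in \mathbb{Z}_2 \times \mathbb{Z}_2^n$ with $|\psi_t(v)|^2 \neq 2^{-(n+1)}$. -/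
open Matrix Complex Finset Kronecker

/-- Hamming weight of a vector in `(ZMod 2)^n`. -/
def wt {n : ℕ} (x : Fin n → ZMod 2) : ℕ := (Finset.univ.filter fun i => x i = 1).card

/-- Inner product modulo 2. -/
def dot {n : ℕ} (a x : Fin n → ZMod 2) : ZMod 2 := ∑ i, a i * x i

/-- Adjacency matrix of the hypercube `Q_n`: `A[x,y] = 1` iff `|x ⊕ y| = 1`. -/
def adjQ (n : ℕ) : Matrix (Fin n → ZMod 2) (Fin n → ZMod 2) ℂ :=
  Matrix.of fun x y => if wt (x + y) = 1 then 1 else 0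

/-- Fourier transform over `(ZMod 2)^n`. -/
noncomputable def fhat {n : ℕ} (f : (Fin n → ZMod 2) → ℝ) (a : Fin n → ZMod 2) : ℝ :=
  ∑ x, f x * (-1 : ℝ) ^ (dot a x).val

/-- The `(ZMod 2)^n`-circulant matrix defined by `f`: `A_f[x,y] = f(x ⊕ y)`. -/
def circ {n : ℕ} (f : (Fin n → ZMod 2) → ℝ) :
    Matrix (Fin n → ZMod 2) (Fin n → ZMod 2) ℂ :=
  Matrix.of fun x y => ((f (x + y) : ℝ) : ℂ)

/-- The Pauli matrix `X` (0 on the diagonal, 1 off the diagonal). -/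
def Xmat : Matrix (ZMod 2) (ZMod 2) ℂ := Matrix.of fun i j => if i ≠ j then 1 else 0

/-- Adjacency matrix of the bunkbed graph `𝓑_n(A_f) = I ⊗ Q_n + X ⊗ A_f`. -/
noncomputable def bunkbed {n : ℕ} (f : (Fin n → ZMod 2) → ℝ) :
    Matrix (ZMod 2 × (Fin n → ZMod 2)) (ZMod 2 × (Fin n → ZMod 2)) ℂ :=
  (1 : Matrix (ZMod 2) (ZMod 2) ℂ) ⊗ₖ (adjQ n) + Xmat ⊗ₖ (circ f)

/-! ### Auxiliary machinery -/

attribute [local instance] Matrix.linftyOpNormedAddCommGroup Matrix.linftyOpNormedRing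
  Matrix.linftyOpNormedAlgebra

/-- `exp` of a matrix acts on an eigenvector by `exp` of the eigenvalue. -/
lemma exp_mulVec_eigen_s11 {m : Type*} [Fintype m] [DecidableEq m] (M : Matrix m m ℂ)
    (u : m → ℂ) (μ : ℂ) (h : M.mulVec u = μ • u) :
    (NormedSpace.exp M).mulVec u = NormedSpace.exp μ • u := by
  have hpow : ∀ k : ℕ, (M ^ k).mulVec u = (μ ^ k) • u := by
    intro k
    induction k with
    | zero => simp [Matrix.one_mulVec]
    | succ k ih =>
      rw [pow_succ, ← Matrix.mulVec_mulVec, h, Matrix.mulVec_smul, ih, smul_smul, ← pow_succ']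
  let L : Matrix m m ℂ →ₗ[ℂ] (m → ℂ) :=
    { toFun := fun A => A.mulVec u
      map_add' := fun A B => Matrix.add_mulVec A B u
      map_smul' := fun c A => by simp [Matrix.smul_mulVec] }
  have hL : Continuous L := L.continuous_of_finiteDimensional
  have hsum : Summable fun k : ℕ => ((k.factorial)⁻¹ : ℂ) • M ^ k :=
    NormedSpace.expSeries_summable' (𝕂 := ℂ) M
  have hmap := (hsum.hasSum.map L hL).tsum_eq
  have hsumμ : Summable fun k : ℕ => ((k.factorial)⁻¹ : ℂ) * μ ^ k := by
    simpa [smul_eq_mul] using NormedSpace.expSeries_summable' (𝕂 := ℂ) μ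
  rw [NormedSpace.exp_eq_tsum (𝕂 := ℂ), NormedSpace.exp_eq_tsum (𝕂 := ℂ)]
  have key : L (∑' k : ℕ, ((k.factorial)⁻¹ : ℂ) • M ^ k)
      = ∑' k : ℕ, (((k.factorial)⁻¹ : ℂ) * μ ^ k) • u := by
    rw [← hmap]
    congr 1
    funext k
    show (((k.factorial)⁻¹ : ℂ) • M ^ k).mulVec u = _
    rw [Matrix.smul_mulVec, hpow k, smul_smul]
  show L _ = _
  rw [key, Summable.tsum_smul_const hsumμ u]
  simp [smul_eq_mul]

noncomputable def sgn2 (u : ZMod 2) : ℂ := if u = 0 then 1 else -1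

lemma zmod2_cases (u : ZMod 2) : u = 0 ∨ u = 1 := by revert u; decide

lemma sgn2_zero : sgn2 0 = 1 := by simp [sgn2]

lemma sgn2_add (u v : ZMod 2) : sgn2 (u + v) = sgn2 u * sgn2 v := by
  rcases zmod2_cases u with hu | hu <;> rcases zmod2_cases v with hv | hv <;>
    subst hu <;> subst hv <;> simp [sgn2, show (1 + 1 : ZMod 2) = 0 from rfl]

lemma sgn2_eq_pow (u : ZMod 2) : sgn2 u = (((-1 : ℝ) ^ u.val : ℝ) : ℂ) := by
  rcases zmod2_cases u with hu | hu <;> subst hu <;>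
    simp [sgn2, show ZMod.val (1 : ZMod 2) = 1 from rfl, show ZMod.val (0 : ZMod 2) = 0 from rfl]

lemma conj_sgn2 (u : ZMod 2) : (starRingEnd ℂ) (sgn2 u) = sgn2 u := by
  rcases zmod2_cases u with hu | hu <;> subst hu <;> simp [sgn2]

lemma dot_add_right {n : ℕ} (a x y : Fin n → ZMod 2) :
    dot a (x + y) = dot a x + dot a y := by
  simp [dot, mul_add, Finset.sum_add_distrib]

lemma dot_add_left {n : ℕ} (a b x : Fin n → ZMod 2) :
    dot (a + b) x = dot a x + dot b x := by
  simp [dot, add_mul, Finset.sum_add_distrib]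

lemma dot_single {n : ℕ} (i : Fin n) (x : Fin n → ZMod 2) :
    dot (Pi.single i 1) x = x i := by
  rw [dot, Finset.sum_eq_single i]
  · simp
  · intro j _ hj; simp [Pi.single_apply, hj]
  · simp

lemma sum_zmod2 (F : ZMod 2 → ℂ) : ∑ u : ZMod 2, F u = F 0 + F 1 :=
  Fin.sum_univ_two F

lemma zmod2_self_add (u : ZMod 2) : u + u = 0 := by
  rcases zmod2_cases u with h | h <;> subst h <;> decide

lemma card_pi_zmod2 (n : ℕ) : Fintype.card (Fin n → ZMod 2) = 2 ^ n := by
  simp [Fintype.card_fun]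

/-- Character orthogonality over `(ZMod 2)^n`, summing over the first argument. -/
lemma sum_sgn2_dot {n : ℕ} (x : Fin n → ZMod 2) :
    ∑ a : Fin n → ZMod 2, sgn2 (dot a x) = if x = 0 then (2 ^ n : ℂ) else 0 := by
  by_cases hx : x = 0
  · subst hx
    simp [dot, sgn2_zero, Finset.card_univ, card_pi_zmod2]
  · simp only [hx, if_false]
    obtain ⟨i, hi⟩ : ∃ i, x i ≠ 0 := by
      by_contra hc
      push_neg at hc
      exact hx (funext fun i => hc i)
    have hxi : x i = 1 := (zmod2_cases (x i)).resolve_left hi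
    have key : ∑ a : Fin n → ZMod 2, sgn2 (dot a x)
        = ∑ a : Fin n → ZMod 2, sgn2 (dot (a + Pi.single i 1) x) :=
      (Fintype.sum_equiv (Equiv.addRight (Pi.single i 1)) _ _ (fun a => rfl)).symm
    have flip : ∀ a : Fin n → ZMod 2, sgn2 (dot (a + Pi.single i 1) x) = - sgn2 (dot a x) := by
      intro a
      rw [dot_add_left, sgn2_add, dot_single, hxi]
      simp [sgn2]
    simp only [flip, Finset.sum_neg_distrib] at key
    linear_combination key / 2

lemma dot_comm {n : ℕ} (a x : Fin n → ZMod 2) : dot a x = dot x a := by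
  simp [dot, mul_comm]

/-- Character orthogonality, summing over the second argument. -/
lemma sum_sgn2_dot' {n : ℕ} (a : Fin n → ZMod 2) :
    ∑ x : Fin n → ZMod 2, sgn2 (dot a x) = if a = 0 then (2 ^ n : ℂ) else 0 := by
  simp only [fun x => dot_comm a x]
  exact sum_sgn2_dot a

/-- The symbol of the bunkbed circulant. -/
noncomputable def gsym {n : ℕ} (f : (Fin n → ZMod 2) → ℝ) (p : ZMod 2 × (Fin n → ZMod 2)) : ℂ :=
  if p.1 = 0 then (if wt p.2 = 1 then 1 else 0) else ((f p.2 : ℝ) : ℂ)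

/-- Characters of `ZMod 2 × (ZMod 2)^n`. -/
noncomputable def chr {n : ℕ} (c : ZMod 2 × (Fin n → ZMod 2)) :
    (ZMod 2 × (Fin n → ZMod 2)) → ℂ :=
  fun p => sgn2 (c.1 * p.1 + dot c.2 p.2)

lemma chr_add {n : ℕ} (c p r : ZMod 2 × (Fin n → ZMod 2)) :
    chr c (p + r) = chr c p * chr c r := by
  rcases p with ⟨s, x⟩; rcases r with ⟨s', y⟩
  show sgn2 (c.1 * (s + s') + dot c.2 (x + y)) = _
  rw [mul_add, dot_add_right, add_add_add_comm, sgn2_add]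
  rfl

lemma prod_self_add {n : ℕ} (p : ZMod 2 × (Fin n → ZMod 2)) : p + p = 0 := by
  rcases p with ⟨s, x⟩
  ext
  · exact zmod2_self_add s
  · show x _ + x _ = 0
    exact zmod2_self_add _

lemma chr_mul_self {n : ℕ} (c p : ZMod 2 × (Fin n → ZMod 2)) : chr c p * chr c p = 1 := by
  rw [← chr_add, prod_self_add]
  show sgn2 (c.1 * 0 + dot c.2 0) = 1
  simp [dot, sgn2_zero]

lemma bunkbed_apply {n : ℕ} (f : (Fin n → ZMod 2) → ℝ)
    (p q : ZMod 2 × (Fin n → ZMod 2)) : bunkbed f p q = gsym f (p + q) := by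
  have h2 : ∀ u v : ZMod 2, u + v = 0 ↔ u = v := by decide
  rcases p with ⟨s, x⟩; rcases q with ⟨s', y⟩
  simp only [bunkbed, Matrix.add_apply, Matrix.kroneckerMap_apply, Matrix.one_apply,
    Xmat, adjQ, circ, gsym, Matrix.of_apply, Prod.mk_add_mk, ne_eq]
  by_cases h : s = s'
  · simp [h, (h2 s s').mpr h, (h2 s' s').mpr rfl]
  · have : ¬ (s + s' = 0) := fun hc => h ((h2 s s').mp hc)
    simp [h, this]

/-- Eigenvalue of the bunkbed matrix on the character `chr (r, a)`. -/
noncomputable def mu {n : ℕ} (f : (Fin n → ZMod 2) → ℝ) (c : ZMod 2 × (Fin n → ZMod 2)) : ℝ :=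
  (∑ z, (if wt z = 1 then (1 : ℝ) else 0) * (-1 : ℝ) ^ (dot c.2 z).val)
    + (if c.1 = 0 then 1 else -1) * fhat f c.2

lemma gsym_sum {n : ℕ} (f : (Fin n → ZMod 2) → ℝ) (c : ZMod 2 × (Fin n → ZMod 2)) :
    ∑ p, gsym f p * chr c p = ((mu f c : ℝ) : ℂ) := by
  rw [Fintype.sum_prod_type, sum_zmod2 (fun u => ∑ z, gsym f (u, z) * chr c (u, z))]
  have h0 : ∑ z, gsym f (0, z) * chr c (0, z)
      = ((∑ z, (if wt z = 1 then (1 : ℝ) else 0) * (-1 : ℝ) ^ (dot c.2 z).val : ℝ) : ℂ) := by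
    push_cast
    refine Finset.sum_congr rfl fun z _ => ?_
    show (if (0 : ZMod 2) = 0 then (if wt z = 1 then (1:ℂ) else 0) else _) *
      sgn2 (c.1 * 0 + dot c.2 z) = _
    rw [if_pos rfl, mul_zero, zero_add, sgn2_eq_pow]
    push_cast
    rcases eq_or_ne (wt z) 1 with h | h <;> simp [h]
  have h1 : ∑ z, gsym f (1, z) * chr c (1, z)
      = ((if c.1 = 0 then (1:ℝ) else -1) * fhat f c.2 : ℝ) := by
    have : ∀ z, gsym f (1, z) * chr c (1, z)
        = (if c.1 = 0 then (1:ℂ) else -1) * ((f z * (-1 : ℝ) ^ (dot c.2 z).val : ℝ) : ℂ) := by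
      intro z
      show (if (1 : ZMod 2) = 0 then _ else ((f z : ℝ) : ℂ)) * sgn2 (c.1 * 1 + dot c.2 z) = _
      rw [if_neg (by decide), mul_one, sgn2_add, sgn2_eq_pow (dot c.2 z)]
      have : sgn2 c.1 = if c.1 = 0 then (1:ℂ) else -1 := rfl
      rw [this]
      push_cast
      ring
    rw [Finset.sum_congr rfl fun z _ => this z, ← Finset.mul_sum]
    push_cast [fhat]
    ring_nf
    rcases zmod2_cases c.1 with h | h <;> simp [h] <;> ring
  rw [h0, h1, mu]
  push_cast
  rcases zmod2_cases c.1 with h | h <;> simp [h, show (1 : ZMod 2) ≠ 0 by decide]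
lemma bunkbed_mulVec {n : ℕ} (f : (Fin n → ZMod 2) → ℝ) (c : ZMod 2 × (Fin n → ZMod 2)) :
    (bunkbed f).mulVec (chr c) = ((mu f c : ℝ) : ℂ) • chr c := by
  funext p
  show ∑ q, bunkbed f p q * chr c q = _
  have step : ∀ q, bunkbed f p q * chr c q
      = chr c p * (gsym f (p + q) * chr c (p + q)) := by
    intro q
    rw [bunkbed_apply, chr_add]
    have : chr c p * (gsym f (p + q) * (chr c p * chr c q))
        = (chr c p * chr c p) * (gsym f (p + q) * chr c q) := by ring
    rw [this, chr_mul_self, one_mul]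
  rw [Finset.sum_congr rfl fun q _ => step q, ← Finset.mul_sum]
  have reindex : ∑ q, gsym f (p + q) * chr c (p + q) = ∑ r, gsym f r * chr c r :=
    Equiv.sum_comp (Equiv.addLeft p) (fun r => gsym f r * chr c r)
  rw [reindex, gsym_sum]
  rw [Pi.smul_apply, smul_eq_mul, mul_comm]
lemma sum_chr_at {n : ℕ} (p : ZMod 2 × (Fin n → ZMod 2)) :
    ∑ c : ZMod 2 × (Fin n → ZMod 2), chr c p
      = if p = 0 then (2 ^ (n + 1) : ℂ) else 0 := by
  have expand : ∀ c : ZMod 2 × (Fin n → ZMod 2),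
      chr c p = sgn2 (c.1 * p.1) * sgn2 (dot c.2 p.2) := fun c => sgn2_add _ _
  rw [Fintype.sum_prod_type]
  simp only [expand]
  rw [← Finset.sum_mul_sum]
  have hr : ∑ r : ZMod 2, sgn2 (r * p.1) = if p.1 = 0 then 2 else 0 := by
    rw [sum_zmod2 (fun r => sgn2 (r * p.1))]
    rcases zmod2_cases p.1 with h | h <;> simp [h, sgn2] <;> norm_num
  rw [hr, sum_sgn2_dot p.2]
  rcases eq_or_ne p 0 with hp | hp
  · subst hp
    simp [Prod.fst_zero, Prod.snd_zero, pow_succ]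
    ring
  · have : p.1 ≠ 0 ∨ p.2 ≠ 0 := by
      by_contra hc
      push_neg at hc
      exact hp (Prod.ext hc.1 hc.2)
    rcases this with h | h
    · simp [hp, h]
    · simp [hp, h]

lemma delta_eq {n : ℕ} :
    (Pi.single ((0 : ZMod 2), (0 : Fin n → ZMod 2)) (1 : ℂ))
      = (2 ^ (n + 1) : ℂ)⁻¹ • ∑ c : ZMod 2 × (Fin n → ZMod 2), chr c := by
  funext p
  have hpow : (2 ^ (n + 1) : ℂ) ≠ 0 := pow_ne_zero _ two_ne_zero
  rw [Pi.smul_apply, Finset.sum_apply, sum_chr_at p, smul_eq_mul]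
  have h00 : ((0 : ZMod 2), (0 : Fin n → ZMod 2)) = (0 : ZMod 2 × (Fin n → ZMod 2)) := rfl
  rw [h00, Pi.single_apply]
  rcases eq_or_ne p 0 with hp | hp
  · subst hp
    rw [if_pos rfl, if_pos rfl, inv_mul_cancel₀ hpow]
  · rw [if_neg hp, if_neg hp, mul_zero]

/-- The explicit amplitude formula for the walk on the bunkbed graph. -/
lemma walk_formula {n : ℕ} (f : (Fin n → ZMod 2) → ℝ) (t : ℝ)
    (v : ZMod 2 × (Fin n → ZMod 2)) :
    walk (bunkbed f) (Pi.single ((0 : ZMod 2), (0 : Fin n → ZMod 2)) 1) t v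
      = (2 ^ (n + 1) : ℂ)⁻¹ *
        ∑ c : ZMod 2 × (Fin n → ZMod 2),
          Complex.exp (-(t : ℂ) * Complex.I * ((mu f c : ℝ) : ℂ)) * chr c v := by
  have heig : ∀ c : ZMod 2 × (Fin n → ZMod 2),
      ((-(t : ℂ) * Complex.I) • bunkbed f).mulVec (chr c)
        = ((-(t : ℂ) * Complex.I) * ((mu f c : ℝ) : ℂ)) • chr c := by
    intro c
    rw [Matrix.smul_mulVec, bunkbed_mulVec, smul_smul]
  have hexp : ∀ c : ZMod 2 × (Fin n → ZMod 2),
      (NormedSpace.exp ((-(t : ℂ) * Complex.I) • bunkbed f)).mulVec (chr c)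
        = Complex.exp ((-(t : ℂ) * Complex.I) * ((mu f c : ℝ) : ℂ)) • chr c := by
    intro c
    rw [exp_mulVec_eigen_s11 _ _ _ (heig c), Complex.exp_eq_exp_ℂ]
  rw [walk, delta_eq, Matrix.mulVec_smul]
  rw [show (NormedSpace.exp ((-(t : ℂ) * Complex.I) • bunkbed f)).mulVec
        (∑ c : ZMod 2 × (Fin n → ZMod 2), chr c)
      = ∑ c : ZMod 2 × (Fin n → ZMod 2),
          (NormedSpace.exp ((-(t : ℂ) * Complex.I) • bunkbed f)).mulVec (chr c) from by
    rw [← Matrix.mulVecLin_apply, map_sum]; simp [Matrix.mulVecLin_apply]]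
  simp only [hexp]
  simp [Finset.sum_apply, mul_comm]
lemma pi_add_eq_zero_iff {n : ℕ} (a b : Fin n → ZMod 2) : a + b = 0 ↔ b = a := by
  have h2 : ∀ u v : ZMod 2, u + v = 0 ↔ v = u := by decide
  constructor
  · intro h; funext i; exact (h2 _ _).mp (congrFun h i)
  · intro h; subst h; funext i; exact zmod2_self_add (b i)

/-- The coefficient of the character `a` in the level-one amplitude. -/
noncomputable def dcoef {n : ℕ} (f : (Fin n → ZMod 2) → ℝ) (t : ℝ) (a : Fin n → ZMod 2) : ℂ :=
  Complex.exp (-(t : ℂ) * Complex.I * ((mu f (0, a) : ℝ) : ℂ))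
    - Complex.exp (-(t : ℂ) * Complex.I * ((mu f (1, a) : ℝ) : ℂ))

lemma walk_level_one {n : ℕ} (f : (Fin n → ZMod 2) → ℝ) (t : ℝ) (x : Fin n → ZMod 2) :
    walk (bunkbed f) (Pi.single ((0 : ZMod 2), (0 : Fin n → ZMod 2)) 1) t (1, x)
      = (2 ^ (n + 1) : ℂ)⁻¹ * ∑ a, dcoef f t a * sgn2 (dot a x) := by
  rw [walk_formula f t (1, x)]
  congr 1
  rw [Fintype.sum_prod_type,
    sum_zmod2 (fun r => ∑ a, Complex.exp (-(t : ℂ) * Complex.I * ((mu f (r, a) : ℝ) : ℂ))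
      * chr (r, a) ((1 : ZMod 2), x)), ← Finset.sum_add_distrib]
  refine Finset.sum_congr rfl fun a _ => ?_
  have c0 : chr ((0 : ZMod 2), a) ((1 : ZMod 2), x) = sgn2 (dot a x) := by
    show sgn2 ((0 : ZMod 2) * 1 + dot a x) = _
    rw [zero_mul, zero_add]
  have c1 : chr ((1 : ZMod 2), a) ((1 : ZMod 2), x) = - sgn2 (dot a x) := by
    show sgn2 ((1 : ZMod 2) * 1 + dot a x) = _
    rw [one_mul, sgn2_add, show sgn2 1 = -1 from if_neg (by decide), neg_one_mul]
  rw [c0, c1, dcoef]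
  ring

lemma parseval_level_one {n : ℕ} (f : (Fin n → ZMod 2) → ℝ) (t : ℝ) :
    ∑ x, Complex.normSq
        (walk (bunkbed f) (Pi.single ((0 : ZMod 2), (0 : Fin n → ZMod 2)) 1) t (1, x))
      = ((2 ^ (n + 1) : ℝ)⁻¹ * (2 ^ (n + 1) : ℝ)⁻¹) * (2 ^ n * ∑ a, Complex.normSq (dcoef f t a)) := by
  have hGsum : ∑ x : Fin n → ZMod 2,
      (∑ a, dcoef f t a * sgn2 (dot a x)) * (starRingEnd ℂ) (∑ b, dcoef f t b * sgn2 (dot b x))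
      = (2 ^ n : ℂ) * ∑ a, dcoef f t a * (starRingEnd ℂ) (dcoef f t a) := by
    have expand : ∀ x : Fin n → ZMod 2,
        (∑ a, dcoef f t a * sgn2 (dot a x)) * (starRingEnd ℂ) (∑ b, dcoef f t b * sgn2 (dot b x))
        = ∑ a, ∑ b, (dcoef f t a * (starRingEnd ℂ) (dcoef f t b)) * sgn2 (dot (a + b) x) := by
      intro x
      rw [map_sum, Finset.sum_mul_sum]
      refine Finset.sum_congr rfl fun a _ => Finset.sum_congr rfl fun b _ => ?_
      simp only [_root_.map_mul, conj_sgn2, dot_add_left, sgn2_add]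
      ring
    simp only [expand]
    rw [Finset.sum_comm]
    have inner : ∀ a : Fin n → ZMod 2,
        ∑ x : Fin n → ZMod 2, ∑ b, (dcoef f t a * (starRingEnd ℂ) (dcoef f t b)) * sgn2 (dot (a + b) x)
        = (dcoef f t a * (starRingEnd ℂ) (dcoef f t a)) * (2 ^ n : ℂ) := by
      intro a
      rw [Finset.sum_comm]
      have hb : ∀ b : Fin n → ZMod 2,
          ∑ x : Fin n → ZMod 2, (dcoef f t a * (starRingEnd ℂ) (dcoef f t b)) * sgn2 (dot (a + b) x)
          = if b = a then (dcoef f t a * (starRingEnd ℂ) (dcoef f t b)) * (2 ^ n : ℂ) else 0 := by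
        intro b
        rw [← Finset.mul_sum, sum_sgn2_dot' (a + b)]
        rcases eq_or_ne b a with h | h
        · subst h
          rw [if_pos ((pi_add_eq_zero_iff b b).mpr rfl), if_pos rfl]
        · rw [if_neg (fun hc => h ((pi_add_eq_zero_iff a b).mp hc)), if_neg h, mul_zero]
      simp only [hb]
      simp [Finset.sum_ite_eq']
    simp only [inner]
    rw [← Finset.sum_mul]
    ring
  have hψ : ∀ x : Fin n → ZMod 2,
      Complex.normSq (walk (bunkbed f) (Pi.single ((0 : ZMod 2), (0 : Fin n → ZMod 2)) 1) t (1, x))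
      = ((2 ^ (n + 1) : ℝ)⁻¹ * (2 ^ (n + 1) : ℝ)⁻¹)
        * Complex.normSq (∑ a, dcoef f t a * sgn2 (dot a x)) := by
    intro x
    rw [walk_level_one, Complex.normSq_mul]
    congr 1
    rw [show ((2 ^ (n + 1) : ℂ)⁻¹) = (((2 ^ (n + 1) : ℝ)⁻¹ : ℝ) : ℂ) from by push_cast; ring]
    rw [Complex.normSq_ofReal]
  simp only [hψ]
  rw [← Finset.mul_sum]
  congr 1
  have := hGsum
  simp only [Complex.mul_conj] at this
  have h2 : ((∑ x : Fin n → ZMod 2, (Complex.normSq (∑ a, dcoef f t a * sgn2 (dot a x)) : ℝ) : ℝ) : ℂ)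
      = (((2 ^ n : ℝ) * ∑ a, (Complex.normSq (dcoef f t a) : ℝ) : ℝ) : ℂ) := by
    push_cast
    convert this using 2 <;> norm_num
  exact_mod_cast h2
lemma abs_exp_it (t r : ℝ) :
    ‖(Complex.exp (-(t : ℂ) * Complex.I * ((r : ℝ) : ℂ)))‖ = 1 := by
  rw [Complex.norm_exp]
  have h : (-(t : ℂ) * Complex.I * ((r : ℝ) : ℂ)).re = 0 := by simp
  rw [h, Real.exp_zero]

lemma dcoef_eq_zero {n : ℕ} (f : (Fin n → ZMod 2) → ℝ) (t : ℝ) (a : Fin n → ZMod 2)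
    (ha : fhat f a = 0) : dcoef f t a = 0 := by
  have h : mu f ((0 : ZMod 2), a) = mu f ((1 : ZMod 2), a) := by
    simp [mu, ha, show (1 : ZMod 2) ≠ 0 by decide]
  rw [dcoef, h, sub_self]

lemma normSq_dcoef_le {n : ℕ} (f : (Fin n → ZMod 2) → ℝ) (t : ℝ) (a : Fin n → ZMod 2) :
    Complex.normSq (dcoef f t a) ≤ 4 := by
  have h1 := abs_exp_it t (mu f ((0 : ZMod 2), a))
  have h2 := abs_exp_it t (mu f ((1 : ZMod 2), a))
  have habs : ‖dcoef f t a‖ ≤ 2 := by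
    have h3 := norm_sub_le (Complex.exp (-(t:ℂ) * Complex.I * ((mu f ((0:ZMod 2), a) : ℝ) : ℂ)))
      (Complex.exp (-(t:ℂ) * Complex.I * ((mu f ((1:ZMod 2), a) : ℝ) : ℂ)))
    rw [h1, h2] at h3
    rw [dcoef]
    linarith
  rw [← Complex.sq_norm]
  nlinarith [norm_nonneg (dcoef f t a), habs]

/-- If the Fourier transform of the Boolean function `f` has support of size
less than `2^(n-1)`, then the quantum walk on the bunkbed `𝓑_n(A_f)` starting
at `(0, 0_n)` is never instantaneous uniform mixing. -/
theorem bunkbed_small_fourier_support_not_uniform_mixing (n : ℕ) (hn : 1 ≤ n)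
    (f : (Fin n → ZMod 2) → ℝ) (hBool : ∀ x, f x = 0 ∨ f x = 1)
    (hsupp : (Finset.univ.filter fun a => fhat f a ≠ 0).card < 2 ^ (n - 1)) :
    ∀ t : ℝ, ∃ v : ZMod 2 × (Fin n → ZMod 2),
      ‖walk (bunkbed f)
        (Pi.single ((0 : ZMod 2), (0 : Fin n → ZMod 2)) 1) t v‖ ^ 2
        ≠ 1 / 2 ^ (n + 1) := by
  intro t
  by_contra hcon
  push_neg at hcon
  have hS1 : ∑ x : Fin n → ZMod 2, Complex.normSq
      (walk (bunkbed f) (Pi.single ((0 : ZMod 2), (0 : Fin n → ZMod 2)) 1) t (1, x))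
      = 2 ^ n * (1 / 2 ^ (n + 1)) := by
    have hterm : ∀ x : Fin n → ZMod 2, Complex.normSq
        (walk (bunkbed f) (Pi.single ((0 : ZMod 2), (0 : Fin n → ZMod 2)) 1) t (1, x))
        = 1 / 2 ^ (n + 1) := by
      intro x
      rw [← Complex.sq_norm]
      exact hcon (1, x)
    simp only [hterm]
    rw [Finset.sum_const, Finset.card_univ, card_pi_zmod2, nsmul_eq_mul]
    push_cast
    ring
  have hP := parseval_level_one f t
  rw [hS1] at hP
  have hrestrict : ∑ a, Complex.normSq (dcoef f t a)
      = ∑ a ∈ Finset.univ.filter (fun a => fhat f a ≠ 0), Complex.normSq (dcoef f t a) := by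
    symm
    apply Finset.sum_filter_of_ne
    intro a _ h hfa
    exact h (by rw [dcoef_eq_zero f t a hfa, Complex.normSq_zero])
  have hbound : ∑ a ∈ Finset.univ.filter (fun a => fhat f a ≠ 0), Complex.normSq (dcoef f t a)
      ≤ ((Finset.univ.filter (fun a => fhat f a ≠ 0)).card : ℝ) * 4 := by
    have := Finset.sum_le_card_nsmul (Finset.univ.filter (fun a => fhat f a ≠ 0))
      (fun a => Complex.normSq (dcoef f t a)) 4 (fun a _ => normSq_dcoef_le f t a)
    simpa [nsmul_eq_mul] using this
  have hcard : (((Finset.univ.filter (fun a => fhat f a ≠ 0)).card : ℕ) : ℝ)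
      < (2 : ℝ) ^ (n - 1) := by exact_mod_cast hsupp
  have hpow1 : (2 : ℝ) ^ (n + 1) = 4 * (2 : ℝ) ^ (n - 1) := by
    have h : n + 1 = (n - 1) + 2 := by omega
    rw [h, pow_add]
    ring
  have hpos : (0:ℝ) < (2:ℝ) ^ (n+1) := by positivity
  have hpos2 : (0:ℝ) < (2:ℝ) ^ n := by positivity
  have hSig : ∑ a, Complex.normSq (dcoef f t a) = 2 ^ (n + 1) := by
    have hne : ((2:ℝ) ^ (n+1)) ≠ 0 := ne_of_gt hpos
    have hne2 : ((2:ℝ) ^ n) ≠ 0 := ne_of_gt hpos2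
    have h1 : (2:ℝ)^n * (1/2^(n+1)) * (2^(n+1) * 2^(n+1))
        = 2^n * ∑ a, Complex.normSq (dcoef f t a) := by
      rw [hP]; field_simp
    have h2 : (2:ℝ)^n * (1/2^(n+1)) * (2^(n+1) * 2^(n+1)) = 2^n * 2^(n+1) := by
      field_simp
    exact (mul_left_cancel₀ hne2 (h1.symm.trans h2))
  rw [hrestrict] at hSig
  linarith [hSig, hbound, hcard, hpow1]
end
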